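/- Let Z be a real random variable Gaussian with mean μ̃ and variance σ̃² ≥ 0. Then for all u ∈ ℝ, |E[σ(u + Z)] − σ((u + μ̃)/√(1 + (π/8)σ̃²))| ≤ 2·‖δ‖_∞. -/

import Mathlib

open MeasureTheory ProbabilityTheory Real
open scoped NNReal

/-- The standard normal CDF `Φ(t) = (2π)^{-1/2} ∫_{-∞}^t e^{-s²/2} ds`. -/
noncomputable def stdNormalCDF (t : ℝ) : ℝ :=
  ∫ s in Set.Iic t, Real.exp (-s ^ 2 / 2) / Real.sqrt (2 * Real.pi)

/-- The logistic (sigmoid) function `σ(t) = 1/(1 + e^{-t})`. -/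
noncomputable def logisticFn (t : ℝ) : ℝ := 1 / (1 + Real.exp (-t))

/-- `δ(t) = Φ(t) − σ(√(8/π)·t)`. -/
noncomputable def deltaFn (t : ℝ) : ℝ :=
  stdNormalCDF t - logisticFn (Real.sqrt (8 / Real.pi) * t)

open scoped ENNReal

lemma integral_exp_gauss (V x₀ : ℝ) (hV : 0 < V) :
    ∫ x : ℝ, Real.exp (-(x - x₀)^2 / (2*V)) = Real.sqrt (2*π*V) := by
  have h : (fun x : ℝ => Real.exp (-(x - x₀)^2 / (2*V)))
      = fun x => (fun y : ℝ => Real.exp (-(2*V)⁻¹ * y^2)) (x - x₀) := by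
    ext x; congr 1; field_simp
  rw [h, integral_sub_right_eq_self (μ := volume) (fun y : ℝ => Real.exp (-(2*V)⁻¹ * y^2)) x₀,
    integral_gaussian]
  congr 1
  field_simp

lemma integrable_exp_gauss (V x₀ : ℝ) (hV : 0 < V) :
    Integrable (fun x : ℝ => Real.exp (-(x - x₀)^2 / (2*V))) := by
  have h : (fun x : ℝ => Real.exp (-(x - x₀)^2 / (2*V)))
      = fun x => (fun y : ℝ => Real.exp (-(2*V)⁻¹ * y^2)) (x - x₀) := by
    ext x; congr 1; field_simp
  rw [h]
  exact (integrable_exp_neg_mul_sq (by positivity)).comp_sub_right x₀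

lemma pdf_prod_eq {v w : ℝ≥0} (hv : v ≠ 0) (hw : w ≠ 0) (m z : ℝ) :
    (fun x => gaussianPDFReal m v x * gaussianPDFReal 0 w (z + x))
      = fun x => gaussianPDFReal (-m) (v + w) z *
          ((Real.sqrt (2*π*((v:ℝ)*w/(v+w))))⁻¹ *
            Real.exp (-(x - ((w:ℝ)*m - v*z)/(v+w))^2 / (2*((v:ℝ)*w/(v+w))))) := by
  have hv' : (0:ℝ) < v := lt_of_le_of_ne v.coe_nonneg (by exact_mod_cast hv.symm)
  have hw' : (0:ℝ) < w := lt_of_le_of_ne w.coe_nonneg (by exact_mod_cast hw.symm)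
  have hvw : (0:ℝ) < (v:ℝ) + w := by positivity
  have hpi : (0:ℝ) < π := Real.pi_pos
  ext x
  simp only [gaussianPDFReal, NNReal.coe_add, sub_zero]
  have hconst : (√(2*π*(v:ℝ)))⁻¹ * (√(2*π*(w:ℝ)))⁻¹
      = (√(2*π*((v:ℝ)+w)))⁻¹ * (√(2*π*((v:ℝ)*w/((v:ℝ)+w))))⁻¹ := by
    rw [← mul_inv, ← mul_inv, ← Real.sqrt_mul (by positivity), ← Real.sqrt_mul (by positivity)]
    congr 2
    field_simp
  have hexp : Real.exp (-(x - m)^2 / (2*(v:ℝ))) * Real.exp (-(z + x)^2 / (2*(w:ℝ)))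
      = Real.exp (-(z - -m)^2 / (2*((v:ℝ)+w))) *
        Real.exp (-(x - ((w:ℝ)*m - v*z)/((v:ℝ)+w))^2 / (2*((v:ℝ)*w/((v:ℝ)+w)))) := by
    rw [← Real.exp_add, ← Real.exp_add]
    congr 1
    field_simp
    ring
  calc (√(2*π*(v:ℝ)))⁻¹ * rexp (-(x - m)^2 / (2*(v:ℝ))) *
        ((√(2*π*(w:ℝ)))⁻¹ * rexp (-(z + x)^2 / (2*(w:ℝ))))
      = ((√(2*π*(v:ℝ)))⁻¹ * (√(2*π*(w:ℝ)))⁻¹) *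
        (rexp (-(x - m)^2 / (2*(v:ℝ))) * rexp (-(z + x)^2 / (2*(w:ℝ)))) := by ring
    _ = _ := by rw [hconst, hexp]; ring

lemma integral_pdf_prod {v w : ℝ≥0} (hv : v ≠ 0) (hw : w ≠ 0) (m z : ℝ) :
    ∫ x : ℝ, gaussianPDFReal m v x * gaussianPDFReal 0 w (z + x)
      = gaussianPDFReal (-m) (v + w) z := by
  have hv' : (0:ℝ) < v := lt_of_le_of_ne v.coe_nonneg (by exact_mod_cast hv.symm)
  have hw' : (0:ℝ) < w := lt_of_le_of_ne w.coe_nonneg (by exact_mod_cast hw.symm)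
  have hV : (0:ℝ) < (v:ℝ)*w/((v:ℝ)+w) := by positivity
  rw [pdf_prod_eq hv hw m z]
  simp_rw [mul_assoc]
  rw [integral_const_mul, integral_const_mul, integral_exp_gauss _ _ hV,
    ← mul_assoc (2:ℝ) π, inv_mul_cancel₀ (by positivity), mul_one]

lemma integrable_pdf_prod {v w : ℝ≥0} (hv : v ≠ 0) (hw : w ≠ 0) (m z : ℝ) :
    Integrable (fun x : ℝ => gaussianPDFReal m v x * gaussianPDFReal 0 w (z + x)) := by
  have hv' : (0:ℝ) < v := lt_of_le_of_ne v.coe_nonneg (by exact_mod_cast hv.symm)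
  have hw' : (0:ℝ) < w := lt_of_le_of_ne w.coe_nonneg (by exact_mod_cast hw.symm)
  have hV : (0:ℝ) < (v:ℝ)*w/((v:ℝ)+w) := by positivity
  rw [pdf_prod_eq hv hw m z]
  exact (((integrable_exp_gauss _ _ hV).const_mul _).const_mul _)

lemma stdNormalCDF_eq (s : ℝ) :
    ((gaussianReal 0 1 : Measure ℝ) (Set.Iic s)).toReal = stdNormalCDF s := by
  rw [gaussianReal_apply_eq_integral 0 one_ne_zero,
    ENNReal.toReal_ofReal (setIntegral_nonneg measurableSet_Iic
      fun x _ => gaussianPDFReal_nonneg _ _ _)]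
  unfold stdNormalCDF
  congr 1
  ext x
  simp only [gaussianPDFReal, NNReal.coe_one, mul_one, sub_zero]
  ring

lemma gaussianReal_Iic_toReal (a t : ℝ) {V : ℝ≥0} (hV : V ≠ 0) :
    ((gaussianReal a V : Measure ℝ) (Set.Iic t)).toReal
      = stdNormalCDF ((t - a) / Real.sqrt V) := by
  have hV' : (0:ℝ) < V := lt_of_le_of_ne V.coe_nonneg (by exact_mod_cast hV.symm)
  have hsq : (0:ℝ) < Real.sqrt V := Real.sqrt_pos.mpr hV'
  have hmap : gaussianReal a V
      = (gaussianReal 0 1).map (fun x : ℝ => Real.sqrt V * x + a) := by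
    have h1 : (gaussianReal (0:ℝ) 1).map (fun x => Real.sqrt V * x)
        = gaussianReal 0 V := by
      rw [show (fun x : ℝ => Real.sqrt V * x) = (Real.sqrt V * ·) from rfl,
        gaussianReal_map_const_mul]
      congr 1
      · ring
      · ext
        simp [Real.sq_sqrt hV'.le]
    have h2 : (gaussianReal (0:ℝ) V).map (· + a) = gaussianReal a V := by
      rw [gaussianReal_map_add_const]; congr 1; ring
    rw [← h2, ← h1, Measure.map_map (measurable_id'.add_const a)
      (measurable_id'.const_mul _)]
    rfl
  rw [hmap, Measure.map_apply (by fun_prop) measurableSet_Iic]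
  have hpre : (fun x : ℝ => Real.sqrt V * x + a) ⁻¹' Set.Iic t
      = Set.Iic ((t - a) / Real.sqrt V) := by
    ext x
    simp only [Set.mem_preimage, Set.mem_Iic]
    rw [le_div_iff₀ hsq]
    constructor <;> intro h <;> nlinarith
  rw [hpre, stdNormalCDF_eq]

lemma shift_setLIntegral (f : ℝ → ℝ≥0∞) (hf : Measurable f) (u x : ℝ) :
    ∫⁻ z in Set.Iic (u + x), f z = ∫⁻ z in Set.Iic u, f (z + x) := by
  have hmap : (volume : Measure ℝ).map (· + x) = volume :=
    (measurePreserving_add_right volume x).map_eq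
  have hpre : ((· + x) ⁻¹' Set.Iic (u + x)) = Set.Iic u := by
    ext y
    simp only [Set.mem_preimage, Set.mem_Iic]
    constructor <;> intro h <;> linarith
  conv_lhs => rw [← hmap]
  rw [setLIntegral_map measurableSet_Iic hf (measurable_add_const x), hpre]

lemma key_lintegral {v w : ℝ≥0} (hv : v ≠ 0) (hw : w ≠ 0) (m u : ℝ) :
    ∫⁻ x, (gaussianReal 0 w : Measure ℝ) (Set.Iic (u + x)) ∂(gaussianReal m v)
      = (gaussianReal (-m) (v + w) : Measure ℝ) (Set.Iic u) := by
  have hg : Measurable fun x : ℝ => (gaussianReal 0 w : Measure ℝ) (Set.Iic (u + x)) := by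
    have hGm : Monotone fun t : ℝ => ∫ z in Set.Iic t, gaussianPDFReal 0 w z := by
      intro a b hab
      exact setIntegral_mono_set (integrable_gaussianPDFReal 0 w).integrableOn
        (ae_of_all _ fun z => gaussianPDFReal_nonneg 0 w z)
        (HasSubset.Subset.eventuallyLE (Set.Iic_subset_Iic.mpr hab))
    have : (fun x : ℝ => (gaussianReal 0 w : Measure ℝ) (Set.Iic (u + x)))
        = fun x => ENNReal.ofReal ((fun t => ∫ z in Set.Iic t, gaussianPDFReal 0 w z) (u + x)) := by
      ext x
      rw [gaussianReal_apply_eq_integral 0 hw]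
    rw [this]
    exact (hGm.measurable.comp (measurable_const_add u)).ennreal_ofReal
  rw [gaussianReal_of_var_ne_zero m hv,
    lintegral_withDensity_eq_lintegral_mul volume (measurable_gaussianPDF m v) hg]
  have h1 : ∀ x : ℝ, (gaussianReal 0 w : Measure ℝ) (Set.Iic (u + x))
      = ∫⁻ z in Set.Iic u, gaussianPDF 0 w (z + x) := by
    intro x
    rw [gaussianReal_apply 0 hw, shift_setLIntegral _ (measurable_gaussianPDF 0 w)]
  simp only [Pi.mul_apply, h1]
  have h2 : ∀ x : ℝ, gaussianPDF m v x * ∫⁻ z in Set.Iic u, gaussianPDF 0 w (z + x)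
      = ∫⁻ z in Set.Iic u, gaussianPDF m v x * gaussianPDF 0 w (z + x) := by
    intro x
    exact (lintegral_const_mul _
      (show Measurable fun z : ℝ => gaussianPDF 0 w (z + x) from (measurable_gaussianPDF 0 w).comp (measurable_add_const x))).symm
  simp only [h2]
  rw [lintegral_lintegral_swap]
  · have h3 : ∀ z : ℝ, ∫⁻ x, gaussianPDF m v x * gaussianPDF 0 w (z + x)
        = gaussianPDF (-m) (v + w) z := by
      intro z
      have : ∀ x : ℝ, gaussianPDF m v x * gaussianPDF 0 w (z + x)
          = ENNReal.ofReal (gaussianPDFReal m v x * gaussianPDFReal 0 w (z + x)) := by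
        intro x
        rw [gaussianPDF_def, gaussianPDF_def,
          ENNReal.ofReal_mul (gaussianPDFReal_nonneg m v x)]
      simp only [this]
      rw [← ofReal_integral_eq_lintegral_ofReal (integrable_pdf_prod hv hw m z)
        (ae_of_all _ fun x => mul_nonneg (gaussianPDFReal_nonneg _ _ _)
          (gaussianPDFReal_nonneg _ _ _)),
        integral_pdf_prod hv hw m z]
      rfl
    simp only [h3]
    rw [← gaussianReal_apply (-m) (by simp [hv]) (Set.Iic u)]
  · apply Measurable.aemeasurable
    exact ((measurable_gaussianPDF m v).comp measurable_fst).mul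
      ((measurable_gaussianPDF 0 w).comp (measurable_snd.add measurable_fst))

lemma key_integral {v w : ℝ≥0} (hv : v ≠ 0) (hw : w ≠ 0) (m u : ℝ) :
    ∫ x, ((gaussianReal 0 w : Measure ℝ) (Set.Iic (u + x))).toReal ∂(gaussianReal m v)
      = ((gaussianReal (-m) (v + w) : Measure ℝ) (Set.Iic u)).toReal := by
  rw [← key_lintegral hv hw m u]
  apply integral_toReal
  · apply Measurable.aemeasurable
    have hGm : Monotone fun t : ℝ => ∫ z in Set.Iic t, gaussianPDFReal 0 w z := by
      intro a b hab
      exact setIntegral_mono_set (integrable_gaussianPDFReal 0 w).integrableOn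
        (ae_of_all _ fun z => gaussianPDFReal_nonneg 0 w z)
        (HasSubset.Subset.eventuallyLE (Set.Iic_subset_Iic.mpr hab))
    have : (fun x : ℝ => (gaussianReal 0 w : Measure ℝ) (Set.Iic (u + x)))
        = fun x => ENNReal.ofReal ((fun t => ∫ z in Set.Iic t, gaussianPDFReal 0 w z) (u + x)) := by
      ext x
      rw [gaussianReal_apply_eq_integral 0 hw]
    rw [this]
    exact (hGm.measurable.comp (measurable_const_add u)).ennreal_ofReal
  · exact ae_of_all _ fun x => lt_of_le_of_lt prob_le_one ENNReal.one_lt_top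

lemma logisticFn_continuous : Continuous logisticFn := by
  unfold logisticFn
  exact continuous_const.div (continuous_const.add (continuous_neg.rexp))
    fun t => by positivity

lemma logisticFn_nonneg (t : ℝ) : 0 ≤ logisticFn t := by
  unfold logisticFn; positivity

lemma logisticFn_le_one (t : ℝ) : logisticFn t ≤ 1 := by
  unfold logisticFn
  rw [div_le_one (by positivity)]
  nlinarith [Real.exp_pos (-t)]

lemma stdNormalCDF_nonneg (t : ℝ) : 0 ≤ stdNormalCDF t := by
  rw [← stdNormalCDF_eq]; exact ENNReal.toReal_nonneg

lemma stdNormalCDF_le_one (t : ℝ) : stdNormalCDF t ≤ 1 := by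
  rw [← stdNormalCDF_eq]
  exact ENNReal.toReal_le_of_le_ofReal one_pos.le (by simpa using prob_le_one)

lemma abs_deltaFn_le_two (t : ℝ) : |deltaFn t| ≤ 2 := by
  unfold deltaFn
  rw [abs_sub_le_iff]
  constructor <;>
    nlinarith [stdNormalCDF_nonneg t, stdNormalCDF_le_one t,
      logisticFn_nonneg (Real.sqrt (8/π) * t), logisticFn_le_one (Real.sqrt (8/π) * t)]

lemma measurable_stdNormalCDF : Measurable stdNormalCDF := by
  have hint : Integrable fun s : ℝ => Real.exp (-s^2/2) / Real.sqrt (2*π) := by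
    have : (fun s : ℝ => Real.exp (-s^2/2) / Real.sqrt (2*π))
        = fun s => Real.exp (-(2:ℝ)⁻¹ * s^2) / Real.sqrt (2*π) := by
      ext s; congr 2; ring
    rw [this]
    exact (integrable_exp_neg_mul_sq (by norm_num)).div_const _
  have : Monotone stdNormalCDF := by
    intro a b hab
    exact setIntegral_mono_set hint.integrableOn
      (ae_of_all _ fun s => by positivity)
      (HasSubset.Subset.eventuallyLE (Set.Iic_subset_Iic.mpr hab))
  exact this.measurable

lemma measurable_deltaFn : Measurable deltaFn :=
  measurable_stdNormalCDF.sub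
    (logisticFn_continuous.measurable.comp (measurable_const_mul _))

/-- Core bound of Theorem 2: if `Z ~ N(μ̃, σ̃²)` (variance `σ̃² ≥ 0`), then for all `u`,
`|E[σ(u + Z)] − σ((u + μ̃)/√(1 + (π/8)σ̃²))| ≤ 2‖δ‖_∞`. -/
theorem logistic_gaussian_expectation_bound {Ω : Type*} [MeasurableSpace Ω]
    (P : Measure Ω) [IsProbabilityMeasure P]
    (Z : Ω → ℝ) (hZ : Measurable Z) (μt : ℝ) (σt2 : ℝ≥0)
    (hdist : P.map Z = gaussianReal μt σt2) (u : ℝ) :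
    |(∫ ω, logisticFn (u + Z ω) ∂P) -
        logisticFn ((u + μt) / Real.sqrt (1 + (Real.pi / 8) * (σt2 : ℝ)))| ≤
      2 * ⨆ t : ℝ, |deltaFn t| := by

  have hpi : (0:ℝ) < π := Real.pi_pos
  set S := ⨆ t : ℝ, |deltaFn t| with hS
  have hbdd : BddAbove (Set.range fun t : ℝ => |deltaFn t|) :=
    ⟨2, by rintro _ ⟨t, rfl⟩; exact abs_deltaFn_le_two t⟩
  have hle : ∀ t : ℝ, |deltaFn t| ≤ S := fun t => le_ciSup hbdd t
  have hS0 : 0 ≤ S := le_trans (abs_nonneg _) (hle 0)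
  -- reduce to gaussian integral
  have hmeas : AEStronglyMeasurable (fun x : ℝ => logisticFn (u + x)) (P.map Z) :=
    (logisticFn_continuous.comp (continuous_const.add continuous_id)).aestronglyMeasurable
  have hstep1 : ∫ ω, logisticFn (u + Z ω) ∂P
      = ∫ x, logisticFn (u + x) ∂(gaussianReal μt σt2) := by
    rw [← hdist, integral_map hZ.aemeasurable hmeas]
  rw [hstep1]
  by_cases hv : σt2 = 0
  · subst hv
    rw [gaussianReal_zero_var, integral_dirac]
    simp only [NNReal.coe_zero, mul_zero, add_zero, Real.sqrt_one, div_one]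
    rw [sub_self, abs_zero]
    positivity
  -- nonzero variance case
  set w : ℝ≥0 := ⟨8/π, by positivity⟩ with hw_def
  have hw : w ≠ 0 := by
    intro h
    have h0 : (8:ℝ)/π = 0 := congrArg NNReal.toReal h
    have h8 : (0:ℝ) < 8/π := by positivity
    linarith
  have hwr : (w:ℝ) = 8/π := rfl
  set c : ℝ := Real.sqrt (8/π) with hc_def
  have hc : 0 < c := Real.sqrt_pos.mpr (by positivity)
  -- pointwise decomposition
  have hpt : ∀ x : ℝ, logisticFn (u + x)
      = ((gaussianReal 0 w : Measure ℝ) (Set.Iic (u + x))).toReal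
        - deltaFn ((u + x) / c) := by
    intro x
    have h1 : ((gaussianReal 0 w : Measure ℝ) (Set.Iic (u + x))).toReal
        = stdNormalCDF ((u + x) / c) := by
      rw [gaussianReal_Iic_toReal 0 (u + x) hw, sub_zero, hwr]
    rw [h1]
    unfold deltaFn
    rw [mul_div_cancel₀ _ (ne_of_gt hc)]
    ring
  simp_rw [hpt]
  -- integrability
  have hgmeas : Measurable fun x : ℝ =>
      ((gaussianReal 0 w : Measure ℝ) (Set.Iic (u + x))).toReal := by
    have : (fun x : ℝ => ((gaussianReal 0 w : Measure ℝ) (Set.Iic (u + x))).toReal)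
        = fun x => stdNormalCDF ((u + x) / c) := by
      ext x
      rw [gaussianReal_Iic_toReal 0 (u + x) hw, sub_zero, hwr]
    rw [this]
    exact measurable_stdNormalCDF.comp ((measurable_const_add u).div_const c)
  have hint1 : Integrable (fun x : ℝ =>
      ((gaussianReal 0 w : Measure ℝ) (Set.Iic (u + x))).toReal) (gaussianReal μt σt2) := by
    refine Integrable.mono' (integrable_const 1) hgmeas.aestronglyMeasurable
      (ae_of_all _ fun x => ?_)
    rw [Real.norm_eq_abs, abs_of_nonneg ENNReal.toReal_nonneg]
    exact ENNReal.toReal_le_of_le_ofReal one_pos.le (by simpa using prob_le_one)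
  have hint2 : Integrable (fun x : ℝ => deltaFn ((u + x) / c)) (gaussianReal μt σt2) := by
    refine Integrable.mono' (integrable_const 2)
      ((measurable_deltaFn.comp ((measurable_const_add u).div_const c)).aestronglyMeasurable)
      (ae_of_all _ fun x => ?_)
    rw [Real.norm_eq_abs]
    exact abs_deltaFn_le_two _
  rw [integral_sub hint1 hint2, key_integral hv hw μt u,
    gaussianReal_Iic_toReal (-μt) u (by simp [hv])]
  -- identify the target logistic argument
  have hT : (u + μt) / Real.sqrt (1 + π/8 * (σt2:ℝ))
      = c * ((u - -μt) / Real.sqrt ((σt2 + w : ℝ≥0) : ℝ)) := by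
    have hcoe : ((σt2 + w : ℝ≥0) : ℝ) = (σt2:ℝ) + 8/π := by
      rw [NNReal.coe_add, hwr]
    rw [hcoe, sub_neg_eq_add]
    have hsq : Real.sqrt ((σt2:ℝ) + 8/π)
        = Real.sqrt (1 + π/8 * (σt2:ℝ)) * c := by
      rw [hc_def, ← Real.sqrt_mul (by positivity)]
      congr 1
      field_simp
      ring
    rw [hsq, hc_def]
    have h1 : (0:ℝ) < Real.sqrt (1 + π/8 * (σt2:ℝ)) := Real.sqrt_pos.mpr (by positivity)
    field_simp
  have htarget : logisticFn ((u + μt) / Real.sqrt (1 + π/8 * (σt2:ℝ)))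
      = stdNormalCDF ((u - -μt) / Real.sqrt ((σt2 + w : ℝ≥0) : ℝ))
        - deltaFn ((u - -μt) / Real.sqrt ((σt2 + w : ℝ≥0) : ℝ)) := by
    rw [hT]
    unfold deltaFn
    rw [← hc_def]
    ring
  rw [htarget]
  set T := (u - -μt) / Real.sqrt ((σt2 + w : ℝ≥0) : ℝ)
  have : stdNormalCDF T - (∫ x, deltaFn ((u + x) / c) ∂gaussianReal μt σt2)
      - (stdNormalCDF T - deltaFn T)
      = deltaFn T - ∫ x, deltaFn ((u + x) / c) ∂gaussianReal μt σt2 := by ring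
  rw [this]
  have habs : |∫ x, deltaFn ((u + x) / c) ∂gaussianReal μt σt2| ≤ S := by
    calc |∫ x, deltaFn ((u + x) / c) ∂gaussianReal μt σt2|
        ≤ ∫ x, |deltaFn ((u + x) / c)| ∂gaussianReal μt σt2 := by
          simpa [Real.norm_eq_abs] using
            norm_integral_le_integral_norm (fun x => deltaFn ((u + x) / c))
      _ ≤ ∫ _, S ∂gaussianReal μt σt2 :=
          integral_mono hint2.abs (integrable_const S) fun x => hle _
      _ = S := by simp
  calc |deltaFn T - ∫ x, deltaFn ((u + x) / c) ∂gaussianReal μt σt2|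
      ≤ |deltaFn T| + |∫ x, deltaFn ((u + x) / c) ∂gaussianReal μt σt2| := abs_sub _ _
    _ ≤ S + S := add_le_add (hle T) habs
    _ = 2 * S := by ring
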